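/- Let K be a semiring, (Σ,M) an OP alphabet, φ a formula of the weighted logic MSO(K,(Σ,M)), and V a finite set of variables with free(φ)⊆V. Then ⟦φ⟧_V(w,σ)=⟦φ⟧(w,σ↾free(φ)) for each valid (w,σ)∈(Σ_V,M_V)^+. Furthermore, ⟦φ⟧ is regular (respectively strictly regular) if and only if ⟦φ⟧_V is regular (respectively strictly regular). -/

import Mathlib

namespace WOP

/-- Precedence relations: yields precedence, equal in precedence, takes precedence. -/
inductive PrecRel where
  | lt | eq | gt
deriving DecidableEq

/-- An operator precedence matrix on `Σ ∪ {#}`, where `none` encodes `#`.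
It assigns at most one precedence relation to each ordered pair, with
`# ⋖ a` and `a ⋗ #` for every letter `a`. -/
structure OPM (A : Type) where
  rel : Option A → Option A → Option PrecRel
  hash_lt : ∀ a : A, rel none (some a) = some .lt
  hash_gt : ∀ a : A, rel (some a) none = some .gt

variable {A B K : Type}

/-- The letter of `#w#` at position `i` (positions `0` and `> |w|` carry `#`, i.e. `none`). -/
def letterAt (w : List A) (i : ℕ) : Option A :=
  if i = 0 then none else w[i - 1]?

section ChainRel

variable (M : OPM A) (L : ℕ → Option A)

mutual
  /-- `ChainMid M L k j`: there are `k = k_s < ... < k_m = j` with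
  `L k_s ≐ L k_{s+1} ≐ ... ≐ L k_{m-1} ⋗ L k_m` and the gap condition between
  consecutive elements. -/
  inductive ChainMid : ℕ → ℕ → Prop where
    | last {k j : ℕ} : M.rel (L k) (L j) = some .gt → ChainGap k j → ChainMid k j
    | step {k k' j : ℕ} : M.rel (L k) (L k') = some .eq → ChainGap k k' →
        ChainMid k' j → ChainMid k j

  /-- The gap condition between consecutive elements of a chain:
  adjacent positions or a chain. -/
  inductive ChainGap : ℕ → ℕ → Prop where
    | adj (k : ℕ) : ChainGap k (k + 1)
    | chain {k k' : ℕ} : Chain k k' → ChainGap k k'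

  /-- The chain relation `i ⤳ j`: there are positions `i = k_1 < ... < k_m = j` with
  `L k_1 ⋖ L k_2 ≐ ... ≐ L k_{m-1} ⋗ L k_m` such that consecutive `k`'s are adjacent
  or themselves related by `⤳`. -/
  inductive Chain : ℕ → ℕ → Prop where
    | mk {i k j : ℕ} : M.rel (L i) (L k) = some .lt → ChainGap i k → ChainMid k j →
        Chain i j
end

end ChainRel

/-- `(Σ,M)^+`: the set of nonempty words compatible with `M`, i.e. `0 ⤳ |w|+1` in `#w#`. -/
def OPWords (M : OPM A) : Set (List A) :=
  {w | w ≠ [] ∧ Chain M (letterAt w) 0 (w.length + 1)}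

/-- An (unweighted) operator precedence automaton over the alphabet `A`. -/
structure OPA (A : Type) where
  Q : Type
  fin : Fintype Q
  I : Set Q
  F : Set Q
  δpush : Set (Q × A × Q)
  δshift : Set (Q × A × Q)
  δpop : Set (Q × Q × Q)

/-- A weighted operator precedence automaton over the alphabet `A` and weights in `K`. -/
structure WOPA (A K : Type) extends OPA A where
  wtpush : Q × A × Q → K
  wtshift : Q × A × Q → K
  wtpop : Q × Q × Q → K

/-- A configuration: a stack of (symbol, state) pairs, a current state,
and the remaining input. -/
structure Config (A Q : Type) where
  stack : List (A × Q)
  state : Q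
  input : List A

/-- The moves (transitions) an OPA may take. -/
inductive Move (A Q : Type) where
  | push (q : Q) (b : A) (r : Q)
  | shift (q : Q) (b : A) (r : Q)
  | pop (q p r : Q)

/-- The topmost stack symbol (`none` = `#` for the empty stack). -/
def topSym {Q : Type} (st : List (A × Q)) : Option A := st.head?.map Prod.fst

/-- One step of an OPA on an OP alphabet `(A, M)`. -/
inductive Exec (M : OPM A) (T : OPA A) : Config A T.Q → Move A T.Q → Config A T.Q → Prop where
  | push {st : List (A × T.Q)} {q r : T.Q} {b : A} {x : List A} :
      M.rel (topSym st) (some b) = some .lt → (q, b, r) ∈ T.δpush →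
      Exec M T ⟨st, q, b :: x⟩ (.push q b r) ⟨(b, q) :: st, r, x⟩
  | shift {st : List (A × T.Q)} {p q r : T.Q} {a b : A} {x : List A} :
      M.rel (some a) (some b) = some .eq → (q, b, r) ∈ T.δshift →
      Exec M T ⟨(a, p) :: st, q, b :: x⟩ (.shift q b r) ⟨(b, p) :: st, r, x⟩
  | pop {st : List (A × T.Q)} {p q r : T.Q} {a : A} {x : List A} :
      M.rel (some a) x.head? = some .gt → (q, p, r) ∈ T.δpop →
      Exec M T ⟨(a, p) :: st, q, x⟩ (.pop q p r) ⟨st, r, x⟩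

/-- Execution of a sequence of moves. -/
inductive ExecList (M : OPM A) (T : OPA A) :
    Config A T.Q → List (Move A T.Q) → Config A T.Q → Prop where
  | nil (c : Config A T.Q) : ExecList M T c [] c
  | cons {c c' c'' : Config A T.Q} {m : Move A T.Q} {ms : List (Move A T.Q)} :
      Exec M T c m c' → ExecList M T c' ms c'' → ExecList M T c (m :: ms) c''

/-- The weight of a move of a weighted OPA. -/
def moveWt [Semiring K] (W : WOPA A K) : Move A W.Q → K
  | .push q b r => W.wtpush (q, b, r)
  | .shift q b r => W.wtshift (q, b, r)
  | .pop q p r => W.wtpop (q, p, r)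

/-- The accepting runs of an OPA on `w`: an initial state, a sequence of moves from the
initial configuration (empty stack, whole input) to a final configuration
(empty stack, input read), and the final state reached. -/
def AccRuns (M : OPM A) (T : OPA A) (w : List A) : Set (T.Q × List (Move A T.Q) × T.Q) :=
  {ρ | ρ.1 ∈ T.I ∧ ρ.2.2 ∈ T.F ∧ ExecList M T ⟨[], ρ.1, w⟩ ρ.2.1 ⟨[], ρ.2.2, []⟩}

/-- The behavior `⟦W⟧(w)`: the sum over all accepting runs of `W` on `w` of the product
(in order) of the weights of the moves of the run. -/
noncomputable def behavior [Semiring K] (M : OPM A) (W : WOPA A K) (w : List A) : K :=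
  ∑ᶠ ρ ∈ AccRuns M W.toOPA w, (ρ.2.1.map (moveWt W)).prod

/-- A weighted OPA is restricted (an rwOPA) if all pop weights are `1`. -/
def Restricted [Semiring K] (W : WOPA A K) : Prop := ∀ t ∈ W.δpop, W.wtpop t = 1

/-- A series `S : (Σ,M)^+ → K` is regular if it is the behavior of some wOPA. -/
def Regular [Semiring K] (M : OPM A) (S : List A → K) : Prop :=
  ∃ W : WOPA A K, ∀ w ∈ OPWords M, S w = behavior M W w

/-- A series is strictly regular if it is the behavior of some restricted wOPA. -/
def StrictlyRegular [Semiring K] (M : OPM A) (S : List A → K) : Prop :=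
  ∃ W : WOPA A K, Restricted W ∧ ∀ w ∈ OPWords M, S w = behavior M W w

/-- Unweighted acceptance. -/
def Accepts (M : OPM A) (T : OPA A) (w : List A) : Prop :=
  ∃ qI ms qF, qI ∈ T.I ∧ qF ∈ T.F ∧ ExecList M T ⟨[], qI, w⟩ ms ⟨[], qF, []⟩

/-- A language `L ⊆ (Σ,M)^+` is an operator precedence language if it is the set of
compatible words accepted by some OPA. -/
def IsOPL (M : OPM A) (L : Set (List A)) : Prop :=
  ∃ T : OPA A, L = {w | w ∈ OPWords M ∧ Accepts M T w}

/-- The intersection `S ∩ L` of a series with a language. -/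
noncomputable def interSeries [Semiring K] (S : List A → K) (L : Set (List A))
    (w : List A) : K :=
  open Classical in if w ∈ L then S w else 0

/-- `h : Σ → Γ` is OPM-preserving: `a ⊙ b` iff `h(a) ⊙ h(b)` for every relation `⊙`. -/
def OPMPreserving (M : OPM A) (M' : OPM B) (h : A → B) : Prop :=
  ∀ a b : A, M.rel (some a) (some b) = M'.rel (some (h a)) (some (h b))

/-- The image series `h(S)(v) = ∑_{w ∈ (Σ,M)^+, h(w) = v} S(w)`. -/
noncomputable def mapSeries [Semiring K] (M : OPM A) (h : A → B) (S : List A → K)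
    (v : List B) : K :=
  ∑ᶠ w ∈ {w | w ∈ OPWords M ∧ w.map h = v}, S w

/-- The pullback OPM `h⁻¹(M)` along `h : Σ' → Σ`. -/
def pullOPM (M : OPM A) (h : B → A) : OPM B where
  rel o₁ o₂ := M.rel (o₁.map h) (o₂.map h)
  hash_lt b := M.hash_lt (h b)
  hash_gt b := M.hash_gt (h b)

/-- The Nivat class `N(Σ,M,K)`: series obtained from a one-state restricted wOPA over a
pulled-back OP alphabet, intersected with an OPL, followed by the projection. -/
def NivatClass [Semiring K] (M : OPM A) (S : List A → K) : Prop :=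
  ∃ (B : Type) (_ : Fintype B) (h : B → A) (W : WOPA B K) (L : Set (List B)),
    Restricted W ∧ (∃ q₀ : W.Q, ∀ q : W.Q, q = q₀) ∧ IsOPL (pullOPM M h) L ∧
    ∀ v ∈ OPWords M,
      S v = mapSeries (pullOPM M h) h (interSeries (behavior (pullOPM M h) W) L) v

/-- An OPL step function: a finite sum `∑ kᵢ · 1_{Lᵢ}` with the `Lᵢ` OPLs forming a
partition of `(Σ,M)^+`. -/
def IsOPLStep [Semiring K] (M : OPM A) (S : List A → K) : Prop :=
  ∃ (n : ℕ) (k : Fin n → K) (L : Fin n → Set (List A)),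
    (∀ i, IsOPL M (L i)) ∧ (∀ i j, i ≠ j → Disjoint (L i) (L j)) ∧
    (⋃ i, L i) = OPWords M ∧ ∀ i, ∀ w ∈ L i, S w = k i



/-!  ### Weighted MSO logic for OPLs -/

/-- Variables: `Sum.inl x` is a first-order variable, `Sum.inr X` a second-order one. -/
abbrev Var : Type := ℕ ⊕ ℕ

/-- Boolean MSO formulas over the OP alphabet `(Σ, M)`; labels range over `Σ ∪ {#}`
(`none` encodes `#`). -/
inductive BFormula (A : Type) where
  | lab (a : Option A) (x : ℕ)
  | le (x y : ℕ)
  | chainR (x y : ℕ)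
  | mem (x X : ℕ)
  | not (β : BFormula A)
  | or (β₁ β₂ : BFormula A)
  | exFO (x : ℕ) (β : BFormula A)
  | exSO (X : ℕ) (β : BFormula A)

/-- Weighted MSO formulas over `(Σ, M)` and the semiring `K`. -/
inductive WFormula (A K : Type) where
  | atom (β : BFormula A)
  | const (k : K)
  | plus (φ ψ : WFormula A K)
  | times (φ ψ : WFormula A K)
  | sumFO (x : ℕ) (φ : WFormula A K)
  | sumSO (X : ℕ) (φ : WFormula A K)
  | prodFO (x : ℕ) (φ : WFormula A K)

/-- Free variables of a boolean formula. -/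
def BFormula.free {A : Type} : BFormula A → Finset Var
  | .lab _ x => {Sum.inl x}
  | .le x y => {Sum.inl x, Sum.inl y}
  | .chainR x y => {Sum.inl x, Sum.inl y}
  | .mem x X => {Sum.inl x, Sum.inr X}
  | .not β => β.free
  | .or β₁ β₂ => β₁.free ∪ β₂.free
  | .exFO x β => β.free \ {Sum.inl x}
  | .exSO X β => β.free \ {Sum.inr X}

/-- Free variables of a weighted formula. -/
def WFormula.free {A K : Type} : WFormula A K → Finset Var
  | .atom β => β.free
  | .const _ => ∅
  | .plus φ ψ => φ.free ∪ ψ.free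
  | .times φ ψ => φ.free ∪ ψ.free
  | .sumFO x φ => φ.free \ {Sum.inl x}
  | .sumSO X φ => φ.free \ {Sum.inr X}
  | .prodFO x φ => φ.free \ {Sum.inl x}

/-- Satisfaction of a boolean formula on `w` under a first-order assignment `σ`
(into positions `1, ..., |w|`) and a second-order assignment `τ`. -/
def BSat (M : OPM A) (w : List A) : (ℕ → ℕ) → (ℕ → Set ℕ) → BFormula A → Prop
  | σ, _, .lab a x => letterAt w (σ x) = a
  | σ, _, .le x y => σ x ≤ σ y
  | σ, _, .chainR x y => Chain M (letterAt w) (σ x) (σ y)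
  | σ, τ, .mem x X => σ x ∈ τ X
  | σ, τ, .not β => ¬ BSat M w σ τ β
  | σ, τ, .or β₁ β₂ => BSat M w σ τ β₁ ∨ BSat M w σ τ β₂
  | σ, τ, .exFO x β => ∃ i ∈ Finset.Icc 1 w.length, BSat M w (Function.update σ x i) τ β
  | σ, τ, .exSO X β => ∃ I ⊆ Set.Icc 1 w.length, BSat M w σ (Function.update τ X I) β

/-- The (assignment-based) semantics of a weighted formula: sums range over the
positions `1, ..., |w|` (resp. their subsets) and the product quantifier multiplies
in increasing order of positions. -/
noncomputable def sem [Semiring K] (M : OPM A) (w : List A) :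
    (ℕ → ℕ) → (ℕ → Set ℕ) → WFormula A K → K
  | σ, τ, .atom β => open Classical in if BSat M w σ τ β then 1 else 0
  | _, _, .const k => k
  | σ, τ, .plus φ ψ => sem M w σ τ φ + sem M w σ τ ψ
  | σ, τ, .times φ ψ => sem M w σ τ φ * sem M w σ τ ψ
  | σ, τ, .sumFO x φ => ∑ i ∈ Finset.Icc 1 w.length, sem M w (Function.update σ x i) τ φ
  | σ, τ, .sumSO X φ => ∑ I ∈ (Finset.Icc 1 w.length).powerset,
      sem M w σ (Function.update τ X (↑I : Set ℕ)) φ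
  | σ, τ, .prodFO x φ =>
      ((List.range w.length).map fun i => sem M w (Function.update σ x (i + 1)) τ φ).prod

/-- The extended alphabet `Σ_V = Σ × {0,1}^V`. -/
abbrev AV (A : Type) (V : Finset Var) : Type := A × ({v // v ∈ V} → Bool)

/-- The OPM `M_V` on `Σ_V`, relating extended letters exactly as `M` relates their
first components. -/
def extOPM (M : OPM A) (V : Finset Var) : OPM (AV A V) where
  rel o₁ o₂ := M.rel (o₁.map Prod.fst) (o₂.map Prod.fst)
  hash_lt p := M.hash_lt p.1
  hash_gt p := M.hash_gt p.1

/-- The bit of the first-order variable `x` is set at position `i` of `u`. -/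
def bitFO (V : Finset Var) (u : List (AV A V)) (x : ℕ) (i : ℕ) : Prop :=
  ∃ h : Sum.inl x ∈ V, ∃ p ∈ u[i - 1]?, 1 ≤ i ∧ p.2 ⟨Sum.inl x, h⟩ = true

/-- The bit of the second-order variable `X` is set at position `i` of `u`. -/
def bitSO (V : Finset Var) (u : List (AV A V)) (X : ℕ) (i : ℕ) : Prop :=
  ∃ h : Sum.inr X ∈ V, ∃ p ∈ u[i - 1]?, 1 ≤ i ∧ p.2 ⟨Sum.inr X, h⟩ = true

/-- A word over `Σ_V` is valid if every first-order variable of `V` is assigned to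
exactly one position. -/
def validEnc (V : Finset Var) (u : List (AV A V)) : Prop :=
  ∀ x : ℕ, Sum.inl x ∈ V → ∃! i, bitFO V u x i

/-- The first-order assignment encoded in a word over `Σ_V`. -/
noncomputable def decFO (V : Finset Var) (u : List (AV A V)) : ℕ → ℕ :=
  fun x => sInf {i | bitFO V u x i}

/-- The second-order assignment encoded in a word over `Σ_V`. -/
def decSO (V : Finset Var) (u : List (AV A V)) : ℕ → Set ℕ :=
  fun X => {i | bitSO V u X i}

/-- The semantics `⟦φ⟧_V : (Σ_V, M_V)^+ → K`: `0` on non-valid words, and otherwise the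
value of `φ` on the decoded word and assignments. -/
noncomputable def semV [Semiring K] (M : OPM A) (φ : WFormula A K) (V : Finset Var)
    (u : List (AV A V)) : K :=
  open Classical in
  if validEnc V u then sem M (u.map Prod.fst) (decFO V u) (decSO V u) φ else 0

/-- Restriction `(w, σ) ↦ (w, σ↾W)` of encoded words from `V`-encodings to
`W`-encodings, for `W ⊆ V`. -/
def restrictWord {V W : Finset Var} (h : W ⊆ V) (u : List (AV A V)) : List (AV A W) :=
  u.map fun p => (p.1, fun v => p.2 ⟨v.1, h v.2⟩)

/-- Semantics of a sentence, as a series over `(Σ, M)^+`. -/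
noncomputable def semClosed [Semiring K] (M : OPM A) (φ : WFormula A K)
    (w : List A) : K :=
  sem M w (fun _ => 1) (fun _ => ∅) φ

/-- Almost boolean formulas: built from constants and boolean formulas by `⊕` and `⊗`. -/
inductive AlmostBoolean {A K : Type} : WFormula A K → Prop where
  | atom (β : BFormula A) : AlmostBoolean (.atom β)
  | const (k : K) : AlmostBoolean (.const k)
  | plus {φ ψ : WFormula A K} :
      AlmostBoolean φ → AlmostBoolean ψ → AlmostBoolean (.plus φ ψ)
  | times {φ ψ : WFormula A K} :
      AlmostBoolean φ → AlmostBoolean ψ → AlmostBoolean (.times φ ψ)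

/-- The constants of `K` occurring in a weighted formula. -/
def consts {A K : Type} : WFormula A K → Set K
  | .atom _ => ∅
  | .const k => {k}
  | .plus φ ψ => consts φ ∪ consts ψ
  | .times φ ψ => consts φ ∪ consts ψ
  | .sumFO _ φ => consts φ
  | .sumSO _ φ => consts φ
  | .prodFO _ φ => consts φ

/-- `⊗`-restricted formulas: in every subformula `ψ ⊗ θ`, either `ψ` is almost boolean
or the constants of `ψ` and `θ` commute elementwise. -/
def TimesRestricted [Semiring K] : WFormula A K → Prop
  | .atom _ => True
  | .const _ => True
  | .plus φ ψ => TimesRestricted φ ∧ TimesRestricted ψ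
  | .times φ ψ => TimesRestricted φ ∧ TimesRestricted ψ ∧
      (AlmostBoolean φ ∨ ∀ k ∈ consts φ, ∀ k' ∈ consts ψ, k * k' = k' * k)
  | .sumFO _ φ => TimesRestricted φ
  | .sumSO _ φ => TimesRestricted φ
  | .prodFO _ φ => TimesRestricted φ

/-- `∏`-restricted formulas: in every subformula `∏ₓ ψ`, the formula `ψ` is
almost boolean. -/
def ProdRestricted {A K : Type} : WFormula A K → Prop
  | .atom _ => True
  | .const _ => True
  | .plus φ ψ => ProdRestricted φ ∧ ProdRestricted ψ
  | .times φ ψ => ProdRestricted φ ∧ ProdRestricted ψ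
  | .sumFO _ φ => ProdRestricted φ
  | .sumSO _ φ => ProdRestricted φ
  | .prodFO _ φ => ProdRestricted φ ∧ AlmostBoolean φ

/-- Restricted formulas: both `⊗`-restricted and `∏`-restricted. -/
def RestrictedFormula [Semiring K] (φ : WFormula A K) : Prop :=
  TimesRestricted φ ∧ ProdRestricted φ

/-- The subformula relation on weighted formulas. -/
inductive Subf {A K : Type} : WFormula A K → WFormula A K → Prop where
  | refl (φ : WFormula A K) : Subf φ φ
  | plusL {χ φ ψ : WFormula A K} : Subf χ φ → Subf χ (.plus φ ψ)
  | plusR {χ φ ψ : WFormula A K} : Subf χ ψ → Subf χ (.plus φ ψ)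
  | timesL {χ φ ψ : WFormula A K} : Subf χ φ → Subf χ (.times φ ψ)
  | timesR {χ φ ψ : WFormula A K} : Subf χ ψ → Subf χ (.times φ ψ)
  | sumFO {χ φ : WFormula A K} {x : ℕ} : Subf χ φ → Subf χ (.sumFO x φ)
  | sumSO {χ φ : WFormula A K} {X : ℕ} : Subf χ φ → Subf χ (.sumSO X φ)
  | prodFO {χ φ : WFormula A K} {x : ℕ} : Subf χ φ → Subf χ (.prodFO x φ)


/-! ### Auxiliary development for the consistency theorem -/

section Mealy

variable {P : Type}

/-- Transduction of a word by a Mealy machine. -/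
def transduce (step : P → A → P) (out : P → A → B) : P → List A → List B
  | _, [] => []
  | p, a :: w => out p a :: transduce step out (step p a) w

@[simp] lemma transduce_nil (step : P → A → P) (out : P → A → B) (p : P) :
    transduce step out p [] = [] := rfl

@[simp] lemma transduce_cons (step : P → A → P) (out : P → A → B) (p : P) (a : A)
    (w : List A) :
    transduce step out p (a :: w) = out p a :: transduce step out (step p a) w := rfl

lemma transduce_eq_map (step : P → A → P) (out : P → A → B) (f : A → B)
    (h : ∀ p a, out p a = f a) : ∀ (p : P) (w : List A), transduce step out p w = w.map f
  | _, [] => rfl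
  | p, a :: w => by
      rw [transduce_cons, h, transduce_eq_map step out f h, List.map_cons]

/-- Product of an OPA with a deterministic letter-driven Mealy machine with
acceptance condition. -/
@[reducible] def prodOPA (T : OPA B) (step : P → A → P) (out : P → A → B) (p0 : P) (Fd : Set P)
    [Fintype P] : OPA A where
  Q := T.Q × P
  fin := letI := T.fin; inferInstance
  I := {s | s.1 ∈ T.I ∧ s.2 = p0}
  F := {s | s.1 ∈ T.F ∧ s.2 ∈ Fd}
  δpush := {t | (t.1.1, out t.1.2 t.2.1, t.2.2.1) ∈ T.δpush ∧ t.2.2.2 = step t.1.2 t.2.1}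
  δshift := {t | (t.1.1, out t.1.2 t.2.1, t.2.2.1) ∈ T.δshift ∧ t.2.2.2 = step t.1.2 t.2.1}
  δpop := {t | (t.1.1, t.2.1.1, t.2.2.1) ∈ T.δpop ∧ t.2.2.2 = t.1.2}

/-- Projection of moves of the product automaton to moves of the original automaton. -/
def projMove (out : P → A → B) {Q : Type} : Move A (Q × P) → Move B Q
  | .push s a u => .push s.1 (out s.2 a) u.1
  | .shift s a u => .shift s.1 (out s.2 a) u.1
  | .pop s t u => .pop s.1 t.1 u.1

/-- Relation between configurations of the product automaton and of the original one. -/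
def CRel (step : P → A → P) (out : P → A → B) {Q : Type}
    (c' : Config A (Q × P)) (c : Config B Q) : Prop :=
  c.state = c'.state.1 ∧ c.input = transduce step out c'.state.2 c'.input ∧
    List.Forall₂ (fun (e' : A × (Q × P)) (e : B × Q) =>
      e.2 = e'.2.1 ∧ ∃ p, e.1 = out p e'.1) c'.stack c.stack

variable {M : OPM A} {M' : OPM B} {T : OPA B} {step : P → A → P} {out : P → A → B}
  {p0 : P} {Fd : Set P} [Fintype P]

lemma rel_top {Q : Type}
    (hcomp : ∀ p q a b, M.rel (some a) (some b) = M'.rel (some (out p a)) (some (out q b)))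
    {st' : List (A × (Q × P))} {st : List (B × Q)}
    (hst : List.Forall₂ (fun (e' : A × (Q × P)) (e : B × Q) =>
      e.2 = e'.2.1 ∧ ∃ p, e.1 = out p e'.1) st' st) (p : P) (b : A) :
    M.rel (topSym st') (some b) = M'.rel (topSym st) (some (out p b)) := by
  cases hst with
  | nil => simp [topSym, M.hash_lt, M'.hash_lt]
  | cons h _ =>
      obtain ⟨-, pp, hpp⟩ := h
      simp only [topSym, List.head?_cons, Option.map_some]
      rw [hpp]
      exact hcomp pp p _ b

lemma rel_head
    (hcomp : ∀ p q a b, M.rel (some a) (some b) = M'.rel (some (out p a)) (some (out q b)))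
    (a : A) (pp p : P) (x : List A) :
    M.rel (some a) x.head? = M'.rel (some (out pp a)) (transduce step out p x).head? := by
  cases x with
  | nil => simp [M.hash_gt, M'.hash_gt]
  | cons c r => simpa using hcomp pp p a c

lemma exec_forward
    (hcomp : ∀ p q a b, M.rel (some a) (some b) = M'.rel (some (out p a)) (some (out q b)))
    {c' c'' : Config A (prodOPA T step out p0 Fd).Q} {m : Move A (T.Q × P)}
    (h : Exec M (prodOPA T step out p0 Fd) c' m c'') {c : Config B T.Q}
    (hR : CRel step out c' c) :
    ∃ d, Exec M' T c (projMove out m) d ∧ CRel step out c'' d := by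
  obtain ⟨cst, cq, cx⟩ := c
  obtain ⟨hq, hx, hst⟩ := hR
  dsimp at hq hx hst
  cases h with
  | @push st q r b x hrel hmem =>
      subst hq
      subst hx
      refine ⟨⟨(out q.2 b, q.1) :: cst, r.1, transduce step out (step q.2 b) x⟩,
        Exec.push (by rw [rel_top hcomp hst q.2 b] at hrel; exact hrel) hmem.1,
        rfl, ?_, ?_⟩
      · dsimp
        rw [hmem.2]
      · exact List.Forall₂.cons ⟨rfl, q.2, rfl⟩ hst
  | @shift st p₁ q r a b x hrel hmem =>
      subst hq
      subst hx
      cases hst with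
      | cons hrel₂ hst₂ =>
          rename_i e cst₂
          obtain ⟨he2, pp, hpp⟩ := hrel₂
          refine ⟨⟨(out q.2 b, e.2) :: cst₂, r.1, transduce step out (step q.2 b) x⟩,
            ?_, rfl, ?_, ?_⟩
          · have hR2 : M'.rel (some e.1) (some (out q.2 b)) = some .eq := by
              rw [hpp, ← hcomp pp q.2 a b]; exact hrel
            exact Exec.shift hR2 hmem.1
          · dsimp
            rw [hmem.2]
          · exact List.Forall₂.cons ⟨he2, q.2, rfl⟩ hst₂
  | @pop st p₁ q r a x hrel hmem =>
      subst hq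
      subst hx
      cases hst with
      | cons hrel₂ hst₂ =>
          rename_i e cst₂
          obtain ⟨eb, ep⟩ := e
          obtain ⟨he2, pp, hpp⟩ := hrel₂
          have he2' : ep = p₁.1 := he2
          subst he2'
          have hpp' : eb = out pp a := hpp
          refine ⟨⟨cst₂, r.1, transduce step out q.2 x⟩, ?_, rfl, ?_, hst₂⟩
          · have hR2 : M'.rel (some eb) (transduce step out q.2 x).head? = some .gt := by
              rw [hpp', ← rel_head hcomp a pp q.2 x]; exact hrel
            exact Exec.pop hR2 hmem.1
          · rw [hmem.2]

lemma exec_backward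
    (hcomp : ∀ p q a b, M.rel (some a) (some b) = M'.rel (some (out p a)) (some (out q b)))
    {c d : Config B T.Q} {m : Move B T.Q}
    (h : Exec M' T c m d) {c' : Config A (T.Q × P)}
    (hR : CRel step out c' c) :
    ∃ m' d', Exec M (prodOPA T step out p0 Fd) c' m' d' ∧ projMove out m' = m ∧
      CRel step out d' d := by
  obtain ⟨st', s, x'⟩ := c'
  obtain ⟨hq, hx, hst⟩ := hR
  dsimp at hq hx hst
  cases h with
  | @push st q r b x hrel hmem =>
      cases x' with
      | nil => simp at hx
      | cons a x₂ =>
          rw [transduce_cons] at hx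
          injection hx with hb hx₂
          subst hq
          subst hb
          subst hx₂
          refine ⟨.push s a (r, step s.2 a), ⟨(a, s) :: st', (r, step s.2 a), x₂⟩,
            ?_, rfl, rfl, rfl, ?_⟩
          · refine Exec.push ?_ ⟨hmem, rfl⟩
            rw [rel_top hcomp hst s.2 a]
            exact hrel
          · exact List.Forall₂.cons ⟨rfl, s.2, rfl⟩ hst
  | @shift st p q r a b x hrel hmem =>
      cases hst with
      | cons hrel₂ hst₂ =>
          rename_i e' st'₂
          obtain ⟨ea, es⟩ := e'
          obtain ⟨he2, pp, hpp0⟩ := hrel₂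
          have hpp : a = out pp ea := hpp0
          cases x' with
          | nil => simp at hx
          | cons a₂ x₂ =>
              rw [transduce_cons] at hx
              injection hx with hb hx₂
              subst hq
              subst hb
              subst hx₂
              refine ⟨.shift s a₂ (r, step s.2 a₂),
                ⟨(a₂, es) :: st'₂, (r, step s.2 a₂), x₂⟩, ?_, rfl, rfl, rfl, ?_⟩
              · refine Exec.shift ?_ ⟨hmem, rfl⟩
                rw [hcomp pp s.2 ea a₂, ← hpp]
                exact hrel
              · exact List.Forall₂.cons ⟨he2, s.2, rfl⟩ hst₂
  | @pop st p q r a x hrel hmem =>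
      cases hst with
      | cons hrel₂ hst₂ =>
          rename_i e' st'₂
          obtain ⟨ea, es⟩ := e'
          obtain ⟨he2, pp, hpp0⟩ := hrel₂
          have hpp : a = out pp ea := hpp0
          subst hq
          have he2' : p = es.1 := he2
          subst he2'
          refine ⟨.pop s es (r, s.2), ⟨st'₂, (r, s.2), x'⟩, ?_, rfl, rfl, hx, hst₂⟩
          · refine Exec.pop ?_ ⟨?_, rfl⟩
            · rw [rel_head hcomp ea pp s.2 x', ← hpp, ← hx]
              exact hrel
            · exact hmem

lemma execList_forward
    (hcomp : ∀ p q a b, M.rel (some a) (some b) = M'.rel (some (out p a)) (some (out q b)))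
    {c' c'' : Config A (prodOPA T step out p0 Fd).Q} {ms : List (Move A (T.Q × P))}
    (h : ExecList M (prodOPA T step out p0 Fd) c' ms c'')
    {c : Config B T.Q} (hR : CRel step out c' c) :
    ∃ d, ExecList M' T c (ms.map (projMove out)) d ∧ CRel step out c'' d := by
  induction h generalizing c with
  | nil c₀ => exact ⟨c, ExecList.nil c, hR⟩
  | cons h1 _ ih =>
      obtain ⟨d, hd, hRd⟩ := exec_forward hcomp h1 hR
      obtain ⟨d₂, hd₂, hRd₂⟩ := ih hRd
      exact ⟨d₂, ExecList.cons hd hd₂, hRd₂⟩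

lemma execList_backward
    (hcomp : ∀ p q a b, M.rel (some a) (some b) = M'.rel (some (out p a)) (some (out q b)))
    {c d : Config B T.Q} {ms : List (Move B T.Q)}
    (h : ExecList M' T c ms d) {c' : Config A (T.Q × P)}
    (hR : CRel step out c' c) :
    ∃ ms' d', ExecList M (prodOPA T step out p0 Fd) c' ms' d' ∧
      ms'.map (projMove out) = ms ∧ CRel step out d' d := by
  induction h generalizing c' with
  | nil c₀ => exact ⟨[], c', ExecList.nil (M := M) (T := prodOPA T step out p0 Fd) c', rfl, hR⟩
  | cons h1 _ ih =>
      obtain ⟨m', d', he, hp, hR'⟩ := exec_backward hcomp h1 hR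
      obtain ⟨ms', d₂, he₂, hp₂, hR₂⟩ := ih hR'
      exact ⟨m' :: ms', d₂, ExecList.cons he he₂, by rw [List.map_cons, hp, hp₂], hR₂⟩

lemma exec_det {A₀ : Type} {M₀ : OPM A₀} {T₀ : OPA A₀} {c d₁ d₂ : Config A₀ T₀.Q}
    {m : Move A₀ T₀.Q} (h1 : Exec M₀ T₀ c m d₁) (h2 : Exec M₀ T₀ c m d₂) : d₁ = d₂ := by
  cases h1 <;> cases h2 <;> rfl

lemma exec_proj_det {c d₁ d₂ : Config A (prodOPA T step out p0 Fd).Q} {m₁ m₂ : Move A (T.Q × P)}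
    (h1 : Exec M (prodOPA T step out p0 Fd) c m₁ d₁)
    (h2 : Exec M (prodOPA T step out p0 Fd) c m₂ d₂)
    (hp : projMove out m₁ = projMove out m₂) : m₁ = m₂ := by
  cases h1 with
  | push hrel1 hmem1 =>
      cases h2 with
      | push hrel2 hmem2 =>
          simp only [projMove, Move.push.injEq] at hp
          exact congrArg _ (Prod.ext_iff.mpr ⟨hp.2.2, hmem1.2.trans hmem2.2.symm⟩)
      | shift hrel2 hmem2 => exact absurd hp (by simp [projMove])
      | pop hrel2 hmem2 => exact absurd hp (by simp [projMove])
  | shift hrel1 hmem1 =>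
      cases h2 with
      | push hrel2 hmem2 => exact absurd hp (by simp [projMove])
      | shift hrel2 hmem2 =>
          simp only [projMove, Move.shift.injEq] at hp
          exact congrArg _ (Prod.ext_iff.mpr ⟨hp.2.2, hmem1.2.trans hmem2.2.symm⟩)
      | pop hrel2 hmem2 => exact absurd hp (by simp [projMove])
  | pop hrel1 hmem1 =>
      cases h2 with
      | push hrel2 hmem2 => exact absurd hp (by simp [projMove])
      | shift hrel2 hmem2 => exact absurd hp (by simp [projMove])
      | pop hrel2 hmem2 =>
          simp only [projMove, Move.pop.injEq] at hp
          exact congrArg _ (Prod.ext_iff.mpr ⟨hp.2.2, hmem1.2.trans hmem2.2.symm⟩)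

lemma execList_proj_det {c : Config A (prodOPA T step out p0 Fd).Q} {ms₁ : List (Move A (T.Q × P))}
    (h1 : ExecList M (prodOPA T step out p0 Fd) c ms₁ d₁) :
    ∀ {ms₂ d₂}, ExecList M (prodOPA T step out p0 Fd) c ms₂ d₂ →
      ms₁.map (projMove out) = ms₂.map (projMove out) → ms₁ = ms₂ ∧ d₁ = d₂ := by
  induction h1 with
  | nil c₀ =>
      intro ms₂ d₂ h2 hp
      cases h2 with
      | nil => exact ⟨rfl, rfl⟩
      | cons _ _ => simp at hp
  | cons he1 _ ih =>
      intro ms₂ d₂ h2 hp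
      cases h2 with
      | nil => simp at hp
      | cons he2 hl2 =>
          simp only [List.map_cons, List.cons.injEq] at hp
          have hm := exec_proj_det he1 he2 hp.1
          subst hm
          have hc := exec_det he1 he2
          subst hc
          obtain ⟨hms, hd⟩ := ih hl2 hp.2
          exact ⟨by rw [hms], hd⟩

lemma exec_foldl {c d : Config A (prodOPA T step out p0 Fd).Q} {m : Move A (T.Q × P)}
    (h : Exec M (prodOPA T step out p0 Fd) c m d) :
    d.input.foldl step d.state.2 = c.input.foldl step c.state.2 := by
  cases h with
  | @push st q r b x hrel hmem =>
      have h2 : r.2 = step q.2 b := hmem.2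
      simp [h2]
  | @shift st p q r a b x hrel hmem =>
      have h2 : r.2 = step q.2 b := hmem.2
      simp [h2]
  | @pop st p q r a x hrel hmem =>
      have h2 : r.2 = q.2 := hmem.2
      simp [h2]

lemma execList_foldl {c d : Config A (prodOPA T step out p0 Fd).Q} {ms : List (Move A (T.Q × P))}
    (h : ExecList M (prodOPA T step out p0 Fd) c ms d) :
    d.input.foldl step d.state.2 = c.input.foldl step c.state.2 := by
  induction h with
  | nil => rfl
  | cons h1 _ ih => rw [ih, exec_foldl h1]

end Mealy

section ProdW

variable {P : Type}

/-- Weighted product of a wOPA with a Mealy machine. -/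
@[reducible] def prodWOPA [Semiring K] (W : WOPA B K) (step : P → A → P) (out : P → A → B) (p0 : P)
    (Fd : Set P) [Fintype P] : WOPA A K where
  toOPA := prodOPA W.toOPA step out p0 Fd
  wtpush := fun t => W.wtpush (t.1.1, out t.1.2 t.2.1, t.2.2.1)
  wtshift := fun t => W.wtshift (t.1.1, out t.1.2 t.2.1, t.2.2.1)
  wtpop := fun t => W.wtpop (t.1.1, t.2.1.1, t.2.2.1)

variable {step : P → A → P} {out : P → A → B} {p0 : P} {Fd : Set P} [Fintype P]

lemma moveWt_prod [Semiring K] (W : WOPA B K) (m : Move A (W.Q × P)) :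
    moveWt (prodWOPA W step out p0 Fd) m = moveWt W (projMove out m) := by
  cases m <;> rfl

lemma prod_restricted [Semiring K] (W : WOPA B K) (hW : Restricted W) :
    Restricted (prodWOPA W step out p0 Fd) := fun t ht => hW _ ht.1

open Classical in
theorem prod_behavior [Semiring K] {M : OPM A} {M' : OPM B} (W : WOPA B K)
    (hcomp : ∀ p q a b, M.rel (some a) (some b) = M'.rel (some (out p a)) (some (out q b)))
    (w : List A) :
    behavior M (prodWOPA W step out p0 Fd) w =
      if w.foldl step p0 ∈ Fd then behavior M' W (transduce step out p0 w) else 0 := by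
  by_cases hFd : w.foldl step p0 ∈ Fd
  · rw [if_pos hFd]
    unfold behavior
    refine finsum_mem_eq_of_bijOn
      (fun ρ => (ρ.1.1, ρ.2.1.map (projMove out), ρ.2.2.1)) ⟨?_, ?_, ?_⟩ ?_
    · rintro ⟨s, ms, t⟩ ⟨hI, hF, hex⟩
      have h0 : CRel step out ⟨[], s, w⟩ ⟨[], s.1, transduce step out p0 w⟩ :=
        ⟨rfl, by rw [hI.2], List.Forall₂.nil⟩
      obtain ⟨d, hd, hRd⟩ := execList_forward hcomp hex h0
      obtain ⟨h1, h2, h3⟩ := hRd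
      have hst : d.stack = [] := List.forall₂_nil_left_iff.mp h3
      have hin : d.input = [] := by simpa using h2
      refine ⟨hI.1, hF.1, ?_⟩
      have hdd : d = ⟨[], t.1, []⟩ := by
        obtain ⟨ds, dq, di⟩ := d
        dsimp at h1 hst hin
        rw [hst, hin, h1]
      rw [← hdd]
      exact hd
    · rintro ⟨s₁, ms₁, t₁⟩ ⟨hI₁, hF₁, hex₁⟩ ⟨s₂, ms₂, t₂⟩ ⟨hI₂, hF₂, hex₂⟩ heq
      simp only [Prod.mk.injEq] at heq
      obtain ⟨e1, e2, e3⟩ := heq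
      have hs : s₁ = s₂ := Prod.ext_iff.mpr ⟨e1, hI₁.2.trans hI₂.2.symm⟩
      subst hs
      obtain ⟨hms, hcfg⟩ := execList_proj_det hex₁ hex₂ e2
      have ht : t₁ = t₂ := by
        have := congrArg Config.state hcfg
        simpa using this
      exact Prod.ext_iff.mpr ⟨rfl, Prod.ext_iff.mpr ⟨hms, ht⟩⟩
    · rintro ⟨q, ms, t⟩ ⟨hI, hF, hex⟩
      have h0 : CRel step out ⟨[], (q, p0), w⟩ ⟨[], q, transduce step out p0 w⟩ :=
        ⟨rfl, rfl, List.Forall₂.nil⟩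
      obtain ⟨ms', d', hex', hproj, hR⟩ := execList_backward hcomp hex h0
      obtain ⟨h1, h2, h3⟩ := hR
      have hst : d'.stack = [] := List.forall₂_nil_right_iff.mp h3
      have hin : d'.input = [] := by
        cases hdi : d'.input with
        | nil => rfl
        | cons a l => rw [hdi] at h2; simp at h2
      have hd' : d' = ⟨[], d'.state, []⟩ := by
        obtain ⟨ds, dq, di⟩ := d'
        dsimp at hst hin
        rw [hst, hin]
      have hfold : d'.state.2 = w.foldl step p0 := by
        have hfl := execList_foldl hex'
        rw [hin] at hfl
        simpa using hfl
      refine ⟨((q, p0), ms', d'.state), ⟨⟨hI, rfl⟩, ⟨?_, ?_⟩, ?_⟩, ?_⟩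
      · dsimp
        rw [← h1]
        exact hF
      · dsimp
        rw [hfold]
        exact hFd
      · rw [← hd']
        exact hex'
      · dsimp
        rw [hproj, ← h1]
    · rintro ⟨s, ms, t⟩ -
      dsimp
      rw [List.map_map]
      have hfun : moveWt (prodWOPA W step out p0 Fd) =
          moveWt W ∘ projMove out := funext (moveWt_prod W)
      rw [hfun]
  · rw [if_neg hFd]
    have hemp : AccRuns M (prodWOPA W step out p0 Fd).toOPA w = ∅ := by
      ext ρ
      simp only [Set.mem_empty_iff_false, iff_false]
      rintro ⟨hI, hF, hex⟩
      have hfl := execList_foldl hex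
      have h' : ρ.2.2.2 = w.foldl step p0 := by simpa [hI.2] using hfl
      exact hFd (h' ▸ hF.2)
    rw [behavior, hemp, finsum_mem_empty]

end ProdW


section Logic

lemma chain_transfer {M₁ : OPM A} {M₂ : OPM B} {L₁ : ℕ → Option A} {L₂ : ℕ → Option B}
    (hrel : ∀ i j, M₁.rel (L₁ i) (L₁ j) = M₂.rel (L₂ i) (L₂ j)) :
    ∀ {i j}, Chain M₁ L₁ i j → Chain M₂ L₂ i j := by
  intro i j hc
  refine Chain.rec (motive_1 := fun a b _ => ChainMid M₂ L₂ a b)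
    (motive_2 := fun a b _ => ChainGap M₂ L₂ a b)
    (motive_3 := fun a b _ => Chain M₂ L₂ a b)
    ?_ ?_ ?_ ?_ ?_ hc
  · intro k j' h g ih
    exact ChainMid.last (by rw [← hrel k j']; exact h) ih
  · intro k k' j' h g hm ihg ihm
    exact ChainMid.step (by rw [← hrel k k']; exact h) ihg ihm
  · intro k
    exact ChainGap.adj k
  · intro k k' h ih
    exact ChainGap.chain ih
  · intro i' k j' h g hm ihg ihm
    exact Chain.mk (by rw [← hrel i' k]; exact h) ihg ihm

lemma letterAt_map (g : A → B) (w : List A) (i : ℕ) :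
    letterAt (w.map g) i = (letterAt w i).map g := by
  unfold letterAt
  by_cases h : i = 0 <;> simp [h, List.getElem?_map]

lemma OPWords_fst {M : OPM A} {V W : Finset Var} {u : List (AV A V)} {u' : List (AV A W)}
    (hf : u.map Prod.fst = u'.map Prod.fst) (hu : u ∈ OPWords (extOPM M V)) :
    u' ∈ OPWords (extOPM M W) := by
  have hlen : u.length = u'.length := by
    have := congrArg List.length hf
    simpa using this
  have hne : u' ≠ [] := by
    intro h
    apply hu.1
    rw [h] at hlen
    exact List.length_eq_zero_iff.mp hlen
  refine ⟨hne, ?_⟩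
  have hc := hu.2
  rw [← hlen]
  refine chain_transfer (fun i j => ?_) hc
  show M.rel ((letterAt u i).map Prod.fst) ((letterAt u j).map Prod.fst) =
    M.rel ((letterAt u' i).map Prod.fst) ((letterAt u' j).map Prod.fst)
  simp only [← letterAt_map, hf]

lemma bsat_congr (M : OPM A) (w : List A) (β : BFormula A) :
    ∀ (σ σ' : ℕ → ℕ) (τ τ' : ℕ → Set ℕ),
      (∀ x, Sum.inl x ∈ β.free → σ x = σ' x) →
      (∀ X, Sum.inr X ∈ β.free → τ X = τ' X) →
      (BSat M w σ τ β ↔ BSat M w σ' τ' β) := by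
  induction β with
  | lab a x =>
      intro σ σ' τ τ' hσ hτ
      simp only [BSat]
      rw [hσ x (by simp [BFormula.free])]
  | le x y =>
      intro σ σ' τ τ' hσ hτ
      simp only [BSat]
      rw [hσ x (by simp [BFormula.free]), hσ y (by simp [BFormula.free])]
  | chainR x y =>
      intro σ σ' τ τ' hσ hτ
      simp only [BSat]
      rw [hσ x (by simp [BFormula.free]), hσ y (by simp [BFormula.free])]
  | mem x X =>
      intro σ σ' τ τ' hσ hτ
      simp only [BSat]
      rw [hσ x (by simp [BFormula.free]), hτ X (by simp [BFormula.free])]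
  | not β ih =>
      intro σ σ' τ τ' hσ hτ
      simp only [BSat]
      exact not_congr (ih σ σ' τ τ' hσ hτ)
  | or β₁ β₂ ih₁ ih₂ =>
      intro σ σ' τ τ' hσ hτ
      simp only [BSat]
      exact or_congr
        (ih₁ σ σ' τ τ' (fun x hx => hσ x (Finset.mem_union_left _ hx))
          (fun X hX => hτ X (Finset.mem_union_left _ hX)))
        (ih₂ σ σ' τ τ' (fun x hx => hσ x (Finset.mem_union_right _ hx))
          (fun X hX => hτ X (Finset.mem_union_right _ hX)))
  | exFO x β ih =>
      intro σ σ' τ τ' hσ hτ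
      simp only [BSat]
      refine exists_congr fun i => and_congr_right fun _ => ih _ _ _ _ ?_ ?_
      · intro y hy
        rcases eq_or_ne y x with rfl | hne
        · simp
        · rw [Function.update_of_ne hne, Function.update_of_ne hne]
          exact hσ y (Finset.mem_sdiff.mpr ⟨hy, by simp [hne]⟩)
      · intro Y hY
        exact hτ Y (Finset.mem_sdiff.mpr ⟨hY, by simp⟩)
  | exSO X β ih =>
      intro σ σ' τ τ' hσ hτ
      simp only [BSat]
      refine exists_congr fun I => and_congr_right fun _ => ih _ _ _ _ ?_ ?_
      · intro y hy
        exact hσ y (Finset.mem_sdiff.mpr ⟨hy, by simp⟩)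
      · intro Y hY
        rcases eq_or_ne Y X with rfl | hne
        · simp
        · rw [Function.update_of_ne hne, Function.update_of_ne hne]
          exact hτ Y (Finset.mem_sdiff.mpr ⟨hY, by simp [hne]⟩)

lemma sem_congr [Semiring K] (M : OPM A) (w : List A) (φ : WFormula A K) :
    ∀ (σ σ' : ℕ → ℕ) (τ τ' : ℕ → Set ℕ),
      (∀ x, Sum.inl x ∈ φ.free → σ x = σ' x) →
      (∀ X, Sum.inr X ∈ φ.free → τ X = τ' X) →
      sem M w σ τ φ = sem M w σ' τ' φ := by
  induction φ with
  | atom β =>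
      intro σ σ' τ τ' hσ hτ
      have hiff := bsat_congr M w β σ σ' τ τ' hσ hτ
      simp only [sem]
      by_cases hc : BSat M w σ τ β
      · rw [if_pos hc, if_pos (hiff.mp hc)]
      · rw [if_neg hc, if_neg fun hc' => hc (hiff.mpr hc')]
  | const k => intros; rfl
  | plus φ ψ ihφ ihψ =>
      intro σ σ' τ τ' hσ hτ
      simp only [sem]
      rw [ihφ σ σ' τ τ' (fun x hx => hσ x (Finset.mem_union_left _ hx))
          (fun X hX => hτ X (Finset.mem_union_left _ hX)),
        ihψ σ σ' τ τ' (fun x hx => hσ x (Finset.mem_union_right _ hx))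
          (fun X hX => hτ X (Finset.mem_union_right _ hX))]
  | times φ ψ ihφ ihψ =>
      intro σ σ' τ τ' hσ hτ
      simp only [sem]
      rw [ihφ σ σ' τ τ' (fun x hx => hσ x (Finset.mem_union_left _ hx))
          (fun X hX => hτ X (Finset.mem_union_left _ hX)),
        ihψ σ σ' τ τ' (fun x hx => hσ x (Finset.mem_union_right _ hx))
          (fun X hX => hτ X (Finset.mem_union_right _ hX))]
  | sumFO x φ ih =>
      intro σ σ' τ τ' hσ hτ
      simp only [sem]
      refine Finset.sum_congr rfl fun i _ => ih _ _ _ _ ?_ ?_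
      · intro y hy
        rcases eq_or_ne y x with rfl | hne
        · simp
        · rw [Function.update_of_ne hne, Function.update_of_ne hne]
          exact hσ y (Finset.mem_sdiff.mpr ⟨hy, by simp [hne]⟩)
      · intro Y hY
        exact hτ Y (Finset.mem_sdiff.mpr ⟨hY, by simp⟩)
  | sumSO X φ ih =>
      intro σ σ' τ τ' hσ hτ
      simp only [sem]
      refine Finset.sum_congr rfl fun I _ => ih _ _ _ _ ?_ ?_
      · intro y hy
        exact hσ y (Finset.mem_sdiff.mpr ⟨hy, by simp⟩)
      · intro Y hY
        rcases eq_or_ne Y X with rfl | hne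
        · simp
        · rw [Function.update_of_ne hne, Function.update_of_ne hne]
          exact hτ Y (Finset.mem_sdiff.mpr ⟨hY, by simp [hne]⟩)
  | prodFO x φ ih =>
      intro σ σ' τ τ' hσ hτ
      simp only [sem]
      have hmaps : (fun i => sem M w (Function.update σ x (i + 1)) τ φ) =
          (fun i => sem M w (Function.update σ' x (i + 1)) τ' φ) := by
        funext i
        refine ih _ _ _ _ ?_ ?_
        · intro y hy
          rcases eq_or_ne y x with rfl | hne
          · simp
          · rw [Function.update_of_ne hne, Function.update_of_ne hne]
            exact hσ y (Finset.mem_sdiff.mpr ⟨hy, by simp [hne]⟩)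
        · intro Y hY
          exact hτ Y (Finset.mem_sdiff.mpr ⟨hY, by simp⟩)
      rw [hmaps]

lemma restrictWord_get? {V W : Finset Var} (h : W ⊆ V) (u : List (AV A V)) (j : ℕ) :
    (restrictWord h u)[j]? =
      (u[j]?).map (fun p => (p.1, fun v => p.2 ⟨v.1, h v.2⟩)) :=
  List.getElem?_map

lemma restrictWord_map_fst {V W : Finset Var} (h : W ⊆ V) (u : List (AV A V)) :
    (restrictWord h u).map Prod.fst = u.map Prod.fst := by
  unfold restrictWord
  rw [List.map_map]
  rfl

lemma bitFO_restrict {V W : Finset Var} (h : W ⊆ V) (u : List (AV A V)) {x : ℕ}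
    (hx : Sum.inl x ∈ W) (i : ℕ) :
    bitFO W (restrictWord h u) x i ↔ bitFO V u x i := by
  constructor
  · rintro ⟨h', p, hp, h1, hb⟩
    rw [restrictWord_get?] at hp
    cases hu : u[i - 1]? with
    | none => rw [hu] at hp; simp at hp
    | some q =>
        rw [hu] at hp
        have hpq : (q.1, fun v => q.2 ⟨v.1, h v.2⟩) = p := by simpa using hp
        subst hpq
        exact ⟨h h', q, by rw [hu]; rfl, h1, hb⟩
  · rintro ⟨h', p, hp, h1, hb⟩
    cases hu : u[i - 1]? with
    | none => rw [hu] at hp; simp at hp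
    | some q =>
        rw [hu] at hp
        have hq : q = p := by simpa using hp
        subst hq
        refine ⟨hx, (q.1, fun v => q.2 ⟨v.1, h v.2⟩), ?_, h1, ?_⟩
        · rw [restrictWord_get?, hu]; rfl
        · exact hb
  
lemma bitSO_restrict {V W : Finset Var} (h : W ⊆ V) (u : List (AV A V)) {X : ℕ}
    (hX : Sum.inr X ∈ W) (i : ℕ) :
    bitSO W (restrictWord h u) X i ↔ bitSO V u X i := by
  constructor
  · rintro ⟨h', p, hp, h1, hb⟩
    rw [restrictWord_get?] at hp
    cases hu : u[i - 1]? with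
    | none => rw [hu] at hp; simp at hp
    | some q =>
        rw [hu] at hp
        have hpq : (q.1, fun v => q.2 ⟨v.1, h v.2⟩) = p := by simpa using hp
        subst hpq
        exact ⟨h h', q, by rw [hu]; rfl, h1, hb⟩
  · rintro ⟨h', p, hp, h1, hb⟩
    cases hu : u[i - 1]? with
    | none => rw [hu] at hp; simp at hp
    | some q =>
        rw [hu] at hp
        have hq : q = p := by simpa using hp
        subst hq
        refine ⟨hX, (q.1, fun v => q.2 ⟨v.1, h v.2⟩), ?_, h1, ?_⟩
        · rw [restrictWord_get?, hu]; rfl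
        · exact hb

lemma validEnc_restrict {V W : Finset Var} (h : W ⊆ V) (u : List (AV A V))
    (hv : validEnc V u) : validEnc W (restrictWord h u) := by
  intro x hx
  obtain ⟨i, hi, hu⟩ := hv x (h hx)
  exact ⟨i, (bitFO_restrict h u hx i).mpr hi, fun j hj => hu j ((bitFO_restrict h u hx j).mp hj)⟩

lemma decFO_restrict {V W : Finset Var} (h : W ⊆ V) (u : List (AV A V)) {x : ℕ}
    (hx : Sum.inl x ∈ W) : decFO W (restrictWord h u) x = decFO V u x := by
  unfold decFO
  congr 1
  ext i
  exact bitFO_restrict h u hx i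

lemma decSO_restrict {V W : Finset Var} (h : W ⊆ V) (u : List (AV A V)) {X : ℕ}
    (hX : Sum.inr X ∈ W) : decSO W (restrictWord h u) X = decSO V u X := by
  ext i
  exact bitSO_restrict h u hX i

lemma semV_restrict [Semiring K] (M : OPM A) (φ : WFormula A K) {V : Finset Var}
    (hV : φ.free ⊆ V) (u : List (AV A V)) (hval : validEnc V u) :
    semV M φ V u = semV M φ φ.free (restrictWord hV u) := by
  have hval' : validEnc φ.free (restrictWord hV u) := validEnc_restrict hV u hval
  unfold semV
  rw [if_pos hval, if_pos hval', restrictWord_map_fst]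
  exact sem_congr M _ φ _ _ _ _ (fun x hx => (decFO_restrict hV u hx).symm)
    (fun X hX => (decSO_restrict hV u hX).symm)

end Logic


section Ext

/-- Output function extending a letter over `Σ_W` to a letter over `Σ_V`:
new first-order bits are set exactly at the first position. -/
def extOut (V W : Finset Var) (h : W ⊆ V) : Bool → AV A W → AV A V :=
  fun b l => (l.1, fun v => if hv : v.1 ∈ W then l.2 ⟨v.1, hv⟩ else !b)

/-- Canonical extension of an encoded word from `Σ_W` to `Σ_V`. -/
def extWord {V W : Finset Var} (h : W ⊆ V) (v : List (AV A W)) : List (AV A V) :=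
  transduce (fun _ _ => true) (extOut V W h) false v

lemma transduce_true {C D : Type} (out : Bool → C → D) (w : List C) :
    transduce (fun _ _ => true) out true w = w.map (out true) := by
  induction w with
  | nil => rfl
  | cons a w ih => rw [transduce_cons, ih, List.map_cons]

lemma extWord_cons {V W : Finset Var} (h : W ⊆ V) (a : AV A W) (v : List (AV A W)) :
    extWord h (a :: v) = extOut V W h false a :: v.map (extOut V W h true) := by
  rw [extWord, transduce_cons, transduce_true]

lemma restrict_extOut {V W : Finset Var} (h : W ⊆ V) (b : Bool) (l : AV A W) :
    ((extOut V W h b l).1, fun v => (extOut V W h b l).2 ⟨v.1, h v.2⟩) = l := by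
  obtain ⟨a, f⟩ := l
  have hfun : (fun (v : {v // v ∈ W}) =>
      (extOut V W h b (a, f)).2 ⟨v.1, h v.2⟩) = f := by
    funext v
    show (if hv : v.1 ∈ W then f ⟨v.1, hv⟩ else !b) = f v
    rw [dif_pos v.2]
  rw [hfun]
  rfl

lemma restrictWord_extWord {V W : Finset Var} (h : W ⊆ V) (v : List (AV A W)) :
    restrictWord h (extWord h v) = v := by
  have key : ∀ (b : Bool) (vs : List (AV A W)),
      List.map (fun (p : AV A V) => (p.1, fun x => p.2 ⟨x.1, h x.2⟩))
        (transduce (fun _ _ => true) (extOut V W h) b vs) = vs := by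
    intro b vs
    induction vs generalizing b with
    | nil => rfl
    | cons a t ih =>
        rw [transduce_cons, List.map_cons, ih true]
        congr 1
        exact restrict_extOut h b a
  exact key false v

lemma extWord_map_fst {V W : Finset Var} (h : W ⊆ V) (v : List (AV A W)) :
    (extWord h v).map Prod.fst = v.map Prod.fst := by
  rw [← restrictWord_map_fst h (extWord h v), restrictWord_extWord]

lemma extWord_get? {V W : Finset Var} (h : W ⊆ V) (v : List (AV A W)) (j : ℕ) :
    (extWord h v)[j]? =
      (v[j]?).map (extOut V W h (if j = 0 then false else true)) := by
  cases v with
  | nil => simp [extWord]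
  | cons a t =>
      cases j with
      | zero => rw [extWord_cons]; rfl
      | succ n => rw [extWord_cons]; simp [List.getElem?_map]

lemma bitFO_extWord {V W : Finset Var} (h : W ⊆ V) {x : ℕ} (hx : Sum.inl x ∈ W)
    (v : List (AV A W)) (i : ℕ) :
    bitFO V (extWord h v) x i ↔ bitFO W v x i := by
  constructor
  · rintro ⟨h', p, hp, h1, hb⟩
    rw [extWord_get?] at hp
    cases hv : v[i - 1]? with
    | none => rw [hv] at hp; simp at hp
    | some q =>
        rw [hv] at hp
        have hpq : extOut V W h (if i - 1 = 0 then false else true) q = p := by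
          simpa using hp
        subst hpq
        refine ⟨hx, q, by rw [hv]; rfl, h1, ?_⟩
        have hb' : (if hv' : Sum.inl x ∈ W then q.2 ⟨Sum.inl x, hv'⟩
            else !(if i - 1 = 0 then false else true)) = true := hb
        rw [dif_pos hx] at hb'
        exact hb'
  · rintro ⟨h', q, hq, h1, hb⟩
    cases hv : v[i - 1]? with
    | none => rw [hv] at hq; simp at hq
    | some q₀ =>
        rw [hv] at hq
        have : q₀ = q := by simpa using hq
        subst this
        refine ⟨h hx, extOut V W h (if i - 1 = 0 then false else true) q₀,
          by rw [extWord_get?, hv]; rfl, h1, ?_⟩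
        show (if hv' : Sum.inl x ∈ W then q₀.2 ⟨Sum.inl x, hv'⟩
            else !(if i - 1 = 0 then false else true)) = true
        rw [dif_pos hx]
        exact hb

lemma bitFO_extWord_new {V W : Finset Var} (h : W ⊆ V) {x : ℕ} (hxV : Sum.inl x ∈ V)
    (hx : Sum.inl x ∉ W) (v : List (AV A W)) (i : ℕ) :
    bitFO V (extWord h v) x i ↔ (i = 1 ∧ v ≠ []) := by
  constructor
  · rintro ⟨h', p, hp, h1, hb⟩
    rw [extWord_get?] at hp
    cases hv : v[i - 1]? with
    | none => rw [hv] at hp; simp at hp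
    | some q =>
        rw [hv] at hp
        have hpq : extOut V W h (if i - 1 = 0 then false else true) q = p := by
          simpa using hp
        subst hpq
        have hb' : (if hv' : Sum.inl x ∈ W then q.2 ⟨Sum.inl x, hv'⟩
            else !(if i - 1 = 0 then false else true)) = true := hb
        rw [dif_neg hx] at hb'
        have hi0 : i - 1 = 0 := by
          by_contra hni
          rw [if_neg hni] at hb'
          simp at hb'
        refine ⟨by omega, ?_⟩
        intro hnil
        rw [hnil] at hv
        simp at hv
  · rintro ⟨rfl, hne⟩
    cases v with
    | nil => exact absurd rfl hne
    | cons a t =>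
        refine ⟨hxV, extOut V W h false a, ?_, le_refl 1, ?_⟩
        · rw [extWord_get?]
          rfl
        · show (if hv' : Sum.inl x ∈ W then a.2 ⟨Sum.inl x, hv'⟩ else !false) = true
          rw [dif_neg hx]
          rfl

lemma validEnc_extWord {V W : Finset Var} (h : W ⊆ V) {v : List (AV A W)} (hne : v ≠ [])
    (hv : validEnc W v) : validEnc V (extWord h v) := by
  intro x hx
  by_cases hxW : Sum.inl x ∈ W
  · obtain ⟨i, hi, hu⟩ := hv x hxW
    exact ⟨i, (bitFO_extWord h hxW v i).mpr hi,
      fun j hj => hu j ((bitFO_extWord h hxW v j).mp hj)⟩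
  · exact ⟨1, (bitFO_extWord_new h hx hxW v 1).mpr ⟨rfl, hne⟩,
      fun j hj => ((bitFO_extWord_new h hx hxW v j).mp hj).1⟩

lemma semV_ext [Semiring K] (M : OPM A) (φ : WFormula A K) {V : Finset Var}
    (hV : φ.free ⊆ V) (v : List (AV A φ.free)) (hne : v ≠ []) :
    semV M φ φ.free v = semV M φ V (extWord hV v) := by
  by_cases hval : validEnc φ.free v
  · have hvalV : validEnc V (extWord hV v) := validEnc_extWord hV hne hval
    rw [semV_restrict M φ hV _ hvalV, restrictWord_extWord]
  · have hvalV : ¬ validEnc V (extWord hV v) := by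
      intro hvv
      apply hval
      have := validEnc_restrict hV _ hvv
      rwa [restrictWord_extWord] at this
    unfold semV
    rw [if_neg hval, if_neg hvalV]

end Ext

section Count

/-- State space of the counting machine: a saturating counter per variable. -/
@[reducible] def cntP (V : Finset Var) : Type := {v // v ∈ V} → Fin 3

instance (V : Finset Var) : Fintype (cntP V) := by unfold cntP; infer_instance

def cntStep (V : Finset Var) (p : cntP V) (l : AV A V) : cntP V :=
  fun v => ⟨min 2 ((p v : ℕ) + if l.2 v then 1 else 0), by omega⟩

def cntFd (V : Finset Var) : Set (cntP V) :=
  {p | ∀ x (hx : Sum.inl x ∈ V), p ⟨Sum.inl x, hx⟩ = 1}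

lemma cnt_foldl {V : Finset Var} (u : List (AV A V)) : ∀ (p : cntP V) (v : {v // v ∈ V}),
    ((u.foldl (cntStep V) p) v : ℕ) = min 2 ((p v : ℕ) + u.countP (fun l => l.2 v)) := by
  induction u with
  | nil =>
      intro p v
      have := (p v).isLt
      simp
      omega
  | cons a t ih =>
      intro p v
      rw [List.foldl_cons, ih, List.countP_cons]
      have h1 : ((cntStep V p a) v : ℕ) = min 2 ((p v : ℕ) + if a.2 v then 1 else 0) := rfl
      rw [h1]
      by_cases hb : a.2 v <;> simp [hb] <;> omega

lemma countP_eq_one_iff {C : Type} (u : List C) (pr : C → Bool) :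
    u.countP pr = 1 ↔ ∃! j : ℕ, ∃ l, u[j]? = some l ∧ pr l = true := by
  induction u with
  | nil => simp [List.countP_nil]
  | cons a t ih =>
      rw [List.countP_cons]
      by_cases ha : pr a = true
      · rw [if_pos ha]
        rw [show (t.countP pr + 1 = 1) ↔ t.countP pr = 0 from by omega,
          List.countP_eq_zero]
        constructor
        · intro hz
          refine ⟨0, ⟨a, rfl, ha⟩, ?_⟩
          rintro j ⟨l, hl, hpl⟩
          cases j with
          | zero => rfl
          | succ n =>
              rw [List.getElem?_cons_succ] at hl
              exact absurd hpl (hz l (List.mem_of_getElem? hl))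
        · rintro ⟨j, hj, huniq⟩
          have hj0 : j = 0 := (huniq 0 ⟨a, rfl, ha⟩).symm
          subst hj0
          intro l hl hpl
          obtain ⟨n, hn⟩ := List.mem_iff_getElem?.mp hl
          have := huniq (n + 1) ⟨l, by rw [List.getElem?_cons_succ]; exact hn, hpl⟩
          omega
      · rw [if_neg ha, Nat.add_zero, ih]
        constructor
        · rintro ⟨j, ⟨l, hl, hpl⟩, hu⟩
          refine ⟨j + 1, ⟨l, by rw [List.getElem?_cons_succ]; exact hl, hpl⟩, ?_⟩
          rintro i ⟨l', hl', hpl'⟩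
          cases i with
          | zero =>
              rw [List.getElem?_cons_zero] at hl'
              injection hl' with hl''
              rw [← hl''] at hpl'
              exact absurd hpl' ha
          | succ n =>
              rw [List.getElem?_cons_succ] at hl'
              rw [hu n ⟨l', hl', hpl'⟩]
        · rintro ⟨j, ⟨l, hl, hpl⟩, hu⟩
          cases j with
          | zero =>
              rw [List.getElem?_cons_zero] at hl
              injection hl with hl''
              subst hl''
              exact absurd hpl ha
          | succ n =>
              rw [List.getElem?_cons_succ] at hl
              refine ⟨n, ⟨l, hl, hpl⟩, ?_⟩
              rintro i ⟨l', hl', hpl'⟩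
              have := hu (i + 1) ⟨l', by rw [List.getElem?_cons_succ]; exact hl', hpl'⟩
              omega

lemma existsUnique_bit_iff {V : Finset Var} (u : List (AV A V)) {x : ℕ}
    (hx : Sum.inl x ∈ V) :
    (∃! i, bitFO V u x i) ↔
      ∃! j : ℕ, ∃ l, u[j]? = some l ∧ l.2 ⟨Sum.inl x, hx⟩ = true := by
  have hbit : ∀ i, bitFO V u x i ↔
      (1 ≤ i ∧ ∃ l, u[i - 1]? = some l ∧ l.2 ⟨Sum.inl x, hx⟩ = true) := by
    intro i
    constructor
    · rintro ⟨h', p, hp, h1, hb⟩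
      exact ⟨h1, p, hp, hb⟩
    · rintro ⟨h1, l, hl, hb⟩
      exact ⟨hx, l, hl, h1, hb⟩
  constructor
  · rintro ⟨i, hi, hu⟩
    obtain ⟨h1, l, hl, hb⟩ := (hbit i).mp hi
    refine ⟨i - 1, ⟨l, hl, hb⟩, ?_⟩
    rintro j ⟨l', hl', hb'⟩
    have := hu (j + 1) ((hbit (j + 1)).mpr ⟨by omega, l', by simpa using hl', hb'⟩)
    omega
  · rintro ⟨j, ⟨l, hl, hb⟩, hu⟩
    refine ⟨j + 1, (hbit (j + 1)).mpr ⟨by omega, l, by simpa using hl, hb⟩, ?_⟩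
    intro i hi
    obtain ⟨h1, l', hl', hb'⟩ := (hbit i).mp hi
    have := hu (i - 1) ⟨l', hl', hb'⟩
    omega

lemma cnt_valid {V : Finset Var} (u : List (AV A V)) :
    (u.foldl (cntStep V) (fun _ => 0) ∈ cntFd V) ↔ validEnc V u := by
  unfold cntFd validEnc
  rw [Set.mem_setOf_eq]
  refine forall_congr' fun x => forall_congr' fun hx => ?_
  have hcnt : ((u.foldl (cntStep V) (fun _ => 0)) ⟨Sum.inl x, hx⟩ : ℕ) =
      min 2 (u.countP (fun l => l.2 ⟨Sum.inl x, hx⟩)) := by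
    rw [cnt_foldl]
    norm_num
  have key : (u.foldl (cntStep V) (fun _ => 0)) ⟨Sum.inl x, hx⟩ = 1 ↔
      u.countP (fun l => l.2 ⟨Sum.inl x, hx⟩) = 1 := by
    rw [Fin.ext_iff, hcnt]
    show min 2 _ = (1 : Fin 3).val ↔ _
    norm_num
    omega
  rw [key, countP_eq_one_iff, ← existsUnique_bit_iff u hx]

end Count


/-- Consistency of the semantics: for `free(φ) ⊆ V`, the `V`-semantics agrees with the
`free(φ)`-semantics on valid words, and the two semantics are simultaneously regular
(resp. strictly regular). -/
theorem consistency {A K : Type} [Fintype A] [Semiring K] (M : OPM A)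
    (φ : WFormula A K) (V : Finset Var) (hV : φ.free ⊆ V) :
    (∀ u ∈ OPWords (extOPM M V), validEnc V u →
        semV M φ V u = semV M φ φ.free (restrictWord hV u)) ∧
    (Regular (extOPM M φ.free) (semV M φ φ.free) ↔
      Regular (extOPM M V) (semV M φ V)) ∧
    (StrictlyRegular (extOPM M φ.free) (semV M φ φ.free) ↔
      StrictlyRegular (extOPM M V) (semV M φ V)) := by
  classical
  -- the two series transformations, via Mealy products
  have dir1 : ∀ W : WOPA (AV A φ.free) K,
      (∀ w ∈ OPWords (extOPM M φ.free), semV M φ φ.free w = behavior (extOPM M φ.free) W w) →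
      ∀ u ∈ OPWords (extOPM M V), semV M φ V u =
        behavior (extOPM M V)
          (prodWOPA W (cntStep V) (fun _ l => (l.1, fun v => l.2 ⟨v.1, hV v.2⟩))
            (fun _ => 0) (cntFd V)) u := by
    intro W hW u hu
    rw [prod_behavior (M := extOPM M V) (M' := extOPM M φ.free) (step := cntStep V)
      (out := fun _ l => (l.1, fun v => l.2 ⟨v.1, hV v.2⟩)) (p0 := fun _ => 0)
      (Fd := cntFd V) W (fun p q a b => rfl) u]
    have htr : transduce (cntStep V) (fun _ l => (l.1, fun v => l.2 ⟨v.1, hV v.2⟩))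
        (fun _ => 0) u = restrictWord hV u :=
      transduce_eq_map (cntStep V)
        (fun (_ : cntP V) (l : AV A V) =>
          ((l.1, fun v => l.2 ⟨v.1, hV v.2⟩) : AV A φ.free))
        (fun (l : AV A V) => ((l.1, fun v => l.2 ⟨v.1, hV v.2⟩) : AV A φ.free))
        (fun p a => rfl) (fun _ => 0) u
    rw [htr]
    by_cases hval : validEnc V u
    · rw [if_pos ((cnt_valid u).mpr hval), semV_restrict M φ hV u hval]
      exact hW (restrictWord hV u) (OPWords_fst (restrictWord_map_fst hV u).symm hu)
    · rw [if_neg fun hc => hval ((cnt_valid u).mp hc)]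
      unfold semV
      rw [if_neg hval]
  have dir2 : ∀ W : WOPA (AV A V) K,
      (∀ w ∈ OPWords (extOPM M V), semV M φ V w = behavior (extOPM M V) W w) →
      ∀ v ∈ OPWords (extOPM M φ.free), semV M φ φ.free v =
        behavior (extOPM M φ.free)
          (prodWOPA W (fun _ _ => true) (extOut V φ.free hV) false Set.univ) v := by
    intro W hW v hv
    rw [prod_behavior (M := extOPM M φ.free) (M' := extOPM M V)
      (step := fun _ _ => true) (out := extOut V φ.free hV) (p0 := false)
      (Fd := Set.univ) W (fun p q a b => rfl) v, if_pos (Set.mem_univ _)]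
    have htr : transduce (fun _ _ => true) (extOut V φ.free hV) false v = extWord hV v := rfl
    rw [htr, ← hW (extWord hV v) (OPWords_fst (extWord_map_fst hV v).symm hv)]
    exact semV_ext M φ hV v hv.1
  refine ⟨fun u _ hval => semV_restrict M φ hV u hval, ?_, ?_⟩
  · constructor
    · rintro ⟨W, hW⟩
      exact ⟨_, dir1 W hW⟩
    · rintro ⟨W, hW⟩
      exact ⟨_, dir2 W hW⟩
  · constructor
    · rintro ⟨W, hres, hW⟩
      exact ⟨_, prod_restricted W hres, dir1 W hW⟩
    · rintro ⟨W, hres, hW⟩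
      exact ⟨_, prod_restricted W hres, dir2 W hW⟩
end WOP
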